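/- Let χ : k₀ → ℝ be a one-dimensional representation of the Lie algebra k₀ = Lie(K) for a split pair (g₀, θ₀), and let V be a g₀-module on which the Casimir Ω acts as c·id. If v ∈ V satisfies (e_α − e₋α)v = χ(y_α)v for all α ∈ R⁺, then for all a ∈ A_reg: (Σⱼ xⱼ² + ½ Σ_{α∈R} ((1+a^{−2α})/(1−a^{−2α})) t_α + Σ_{α∈R} (1/(a^{−α}−a^α)²) Π_{ε∈{±1}} (Ad_{a⁻¹}(y_α) − a^{−εα} χ(y_α))) v = c v, where the product means the composition (Ad_{a⁻¹}(y_α) − a^{−α}χ(y_α))(Ad_{a⁻¹}(y_α) − a^{α}χ(y_α)) of operators on V. -/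

import Mathlib

/-- Let `χ ∈ ch(k₀)` be a one-dimensional real representation of `k₀` (recorded through its
values `χ i = χ(y_{α_i})` on the basis `y_α = e_α − e_{−α}`, `α ∈ R⁺`), and let `V` be a
`g₀`-module on which the Casimir `Ω = Σⱼ xⱼ² + Σ_{α∈R} e_α e_{−α}` acts as `c·id`
(`c ∈ ℝ`).  If `v ∈ V^χ`, i.e. `(e_α − e_{−α})v = χ(y_α)v` for all `α ∈ R⁺`, then for
all `a ∈ A_reg` (with `p i = a^{α_i} ≠ 0` and `a^{α_i} − a^{−α_i} ≠ 0`, and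
`Ad_{a⁻¹}(y_α) = a^{−α} e_α − a^{α} e_{−α}`):
`(Σⱼ xⱼ² + ½ Σ_{α∈R} ((1+a^{−2α})/(1−a^{−2α})) t_α
  + Σ_{α∈R} (1/(a^{−α}−a^{α})²) Π_{ε∈{±1}} (Ad_{a⁻¹}(y_α) − a^{−εα} χ(y_α))) v = c v`.
Positive roots are indexed by `ι'` (`e i`, `f i = e_{−α_i}`, `t i`); the sums over `R`
are realised as sums over `R⁺` of the two (equal, resp. paired) `±α` contributions. -/
theorem stmt_18 (L : Type*) [LieRing L] [LieAlgebra ℂ L]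
    (V : Type*) [AddCommGroup V] [Module ℂ V] [LieRingModule L V] [LieModule ℂ L V]
    (rk : ℕ) (x : Fin rk → L)
    (ι' : Type*) [Fintype ι'] (e f t : ι' → L)
    (hbr : ∀ i, ⁅e i, f i⁆ = t i)
    (c : ℝ)
    (hΩ : ∀ w : V,
      (∑ j, ⁅x j, ⁅x j, w⁆⁆) + ∑ i, (⁅e i, ⁅f i, w⁆⁆ + ⁅f i, ⁅e i, w⁆⁆) = (c : ℂ) • w)
    (χ : ι' → ℝ) (v : V)
    (hχ : ∀ i, ⁅e i, v⁆ - ⁅f i, v⁆ = (χ i : ℂ) • v)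
    (p : ι' → ℂ) (hp0 : ∀ i, p i ≠ 0) (hpreg : ∀ i, p i - (p i)⁻¹ ≠ 0) :
    (∑ j, ⁅x j, ⁅x j, v⁆⁆)
      + ∑ i, ((1 + ((p i)⁻¹)^2)/(1 - ((p i)⁻¹)^2)) • ⁅t i, v⁆
      + ∑ i, (2/((p i)⁻¹ - p i)^2) •
          (⁅(p i)⁻¹ • e i - p i • f i,
              ⁅(p i)⁻¹ • e i - p i • f i, v⁆ - (p i * (χ i : ℂ)) • v⁆
            - ((p i)⁻¹ * (χ i : ℂ)) •
              (⁅(p i)⁻¹ • e i - p i • f i, v⁆ - (p i * (χ i : ℂ)) • v))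
      = (c : ℂ) • v := by
  have key : ∀ i : ι',
      ((1 + ((p i)⁻¹)^2)/(1 - ((p i)⁻¹)^2)) • ⁅t i, v⁆
      + (2/((p i)⁻¹ - p i)^2) •
          (⁅(p i)⁻¹ • e i - p i • f i,
              ⁅(p i)⁻¹ • e i - p i • f i, v⁆ - (p i * (χ i : ℂ)) • v⁆
            - ((p i)⁻¹ * (χ i : ℂ)) •
              (⁅(p i)⁻¹ • e i - p i • f i, v⁆ - (p i * (χ i : ℂ)) • v))
      = ⁅e i, ⁅f i, v⁆⁆ + ⁅f i, ⁅e i, v⁆⁆ := by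
    intro i
    have hq : p i ≠ 0 := hp0 i
    have hs : (p i)⁻¹ - p i ≠ 0 := fun h => hpreg i (by
      have : p i - (p i)⁻¹ = -((p i)⁻¹ - p i) := by ring
      rw [this, h, neg_zero])
    have hinv : (p i)⁻¹ ≠ 0 := inv_ne_zero hq
    have hB : 1 - (p i)^2 ≠ 0 := by
      intro h
      apply hs
      have : (p i)⁻¹ - p i = (1 - (p i)^2) * (p i)⁻¹ := by
        field_simp
      rw [this, h, zero_mul]
    have hB' : (p i)^2 - 1 ≠ 0 := by
      intro h
      apply hB
      have : (1 : ℂ) - (p i)^2 = -((p i)^2 - 1) := by ring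
      rw [this, h, neg_zero]
    have hB'' : -1 + (p i)^2 ≠ 0 := by
      intro h
      apply hB'
      have : (p i)^2 - 1 = -1 + (p i)^2 := by ring
      rw [this, h]
    have hD0 : (1 - (p i)^2) * (1 - (p i)^2) ≠ 0 := mul_ne_zero hB hB
    have hD1 : 1 - (p i)^2*2 + (p i)^4 ≠ 0 := by
      intro h; apply hD0; linear_combination h
    have hD2 : (p i)^2 - (p i)^4*2 + (p i)^6 ≠ 0 := by
      intro h
      apply mul_ne_zero (pow_ne_zero 2 hq) hD1
      linear_combination h
    have hD3 : (p i)^5 - (p i)^7*2 + (p i)^9 ≠ 0 := by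
      intro h
      apply mul_ne_zero (pow_ne_zero 5 hq) hD1
      linear_combination h
    have h1 : ⁅e i, v⁆ = ⁅f i, v⁆ + (χ i : ℂ) • v := by
      have := hχ i
      rw [sub_eq_iff_eq_add] at this
      rw [this, add_comm]
    have ht : ⁅t i, v⁆ = ⁅e i, ⁅f i, v⁆⁆ - ⁅f i, ⁅e i, v⁆⁆ := by
      rw [← hbr i, lie_lie]
    simp only [sub_lie, smul_lie, lie_sub, lie_smul, ht, h1, lie_add]
    match_scalars
    all_goals field_simp [hq, hB, hB', hB'', hD1, hD2, hD3]
    · ring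
    · ring
    · ring
    · first
      | exact Or.inl trivial
      | ring
  rw [add_assoc, ← Finset.sum_add_distrib]
  simp only [key]
  exact hΩ v
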